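/- Let (X, ◁) be a finite quandle and T' ≺○ T two topologies (quasi-orders) on X. If T and the quotient topology T/T' are both compatible with the quandle, then T' is compatible with the quandle. -/

import Mathlib

/-- The quotient quasi-order `T/T'`: transitive closure of `x R y ⟺ x ≤_T y ∨ y ≤_{T'} x`. -/
def quotRel {α : Type*} (le le' : α → α → Prop) : α → α → Prop :=
  Relation.TransGen (fun x y => le x y ∨ le' y x)

/-- A subset `Y` is connected for the topology corresponding to the quasi-order `le'`:
any two points of `Y` are linked by a zigzag of comparabilities inside `Y`. -/
def connectedFor {α : Type*} (le' : α → α → Prop) (Y : Set α) : Prop :=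
  Y.Nonempty ∧ ∀ x ∈ Y, ∀ y ∈ Y,
    Relation.ReflTransGen (fun a b => a ∈ Y ∧ b ∈ Y ∧ (le' a b ∨ le' b a)) x y

/-- `T' ≺○ T`: `T'` is finer than `T`; `T'` and `T` agree on every `T'`-connected subset;
and `x ∼_{T/T'} y ⟺ x ∼_{T'/T'} y`. -/
def finerCirc {α : Type*} (le' le : α → α → Prop) : Prop :=
  (∀ x y, le' x y → le x y) ∧
  (∀ Y : Set α, connectedFor le' Y → ∀ x ∈ Y, ∀ y ∈ Y, (le' x y ↔ le x y)) ∧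
  (∀ x y, (quotRel le le' x y ∧ quotRel le le' y x) ↔
          (quotRel le' le' x y ∧ quotRel le' le' y x))

/-- A quasi-order `le` is Q-compatible with the quandle `(X, ◁)` if `x ≤ x'` and `y ≤ y'`
imply `x ◁ y ≤ x' ◁ y'`. -/
def qCompatible {X : Type*} (op : X → X → X) (le : X → X → Prop) : Prop :=
  ∀ x x' y y', le x x' → le y y' → le (op x y) (op x' y')

/-- If `T' ≺○ T` and both `T` and the quotient `T/T'` are compatible with the finite
quandle `(X, ◁)`, then `T'` is compatible with the quandle. -/
theorem finer_topology_compatible {X : Type*} [Fintype X] (op : X → X → X)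
    (hidem : ∀ a, op a a = a)
    (hbij : ∀ b : X, Function.Bijective (fun a => op a b))
    (hdist : ∀ a b c, op (op a b) c = op (op a c) (op b c))
    (le le' : X → X → Prop)
    (hrefl : ∀ x, le x x) (htrans : ∀ x y z, le x y → le y z → le x z)
    (hrefl' : ∀ x, le' x x) (htrans' : ∀ x y z, le' x y → le' y z → le' x z)
    (hfc : finerCirc le' le)
    (hT : qCompatible op le) (hTT' : qCompatible op (quotRel le le')) :
    qCompatible op le' := by
  intro x x' y y' hx hy
  obtain ⟨h1, h2, h3⟩ := hfc
  have qx : quotRel le le' x x' := Relation.TransGen.single (Or.inl (h1 _ _ hx))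
  have qx' : quotRel le le' x' x := Relation.TransGen.single (Or.inr hx)
  have qy : quotRel le le' y y' := Relation.TransGen.single (Or.inl (h1 _ _ hy))
  have qy' : quotRel le le' y' y := Relation.TransGen.single (Or.inr hy)
  have hq := (h3 (op x y) (op x' y')).mp
    ⟨hTT' _ _ _ _ qx qy, hTT' _ _ _ _ qx' qy'⟩
  set R : X → X → Prop := fun a b => le' a b ∨ le' b a with hR
  have hRsymm : Symmetric R := fun a b h => h.symm
  set c := op x y
  set d := op x' y'
  set Y : Set X := {z | Relation.ReflTransGen R c z} with hY
  have hcY : c ∈ Y := Relation.ReflTransGen.refl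
  have hdY : d ∈ Y := hq.1.to_reflTransGen
  -- every point of Y is reachable from c by a guarded zigzag
  have key : ∀ u ∈ Y, Relation.ReflTransGen
      (fun a b => a ∈ Y ∧ b ∈ Y ∧ R a b) c u := by
    intro u hu
    induction hu with
    | refl => exact Relation.ReflTransGen.refl
    | tail hcb hbu ih =>
      rename_i b u'
      exact ih.tail ⟨hcb, hcb.tail hbu, hbu⟩
  have hconn : connectedFor le' Y := by
    refine ⟨⟨c, hcY⟩, fun u hu v hv => ?_⟩
    have hsym : Symmetric (fun a b => a ∈ Y ∧ b ∈ Y ∧ R a b) :=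
      fun a b h => ⟨h.2.1, h.1, hRsymm h.2.2⟩
    exact ((@Relation.ReflTransGen.symmetric _ _ ⟨hsym⟩).symm _ _ (key u hu)).trans (key v hv)
  exact (h2 Y hconn c hcY d hdY).mpr (hT _ _ _ _ (h1 _ _ hx) (h1 _ _ hy))
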